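/- Under the hypotheses of the generalized Azuma inequality, the random variable ξ_n satisfies log E[exp(λξ_n)] ≤ φ_p(λ (γ_r^r + d_0^r)^{1/r}) for all λ ∈ ℝ, i.e. τ_{φ_p}(ξ_n) ≤ (γ_r^r + d_0^r)^{1/r}. -/

import Mathlib

open MeasureTheory Real Filter
open scoped NNReal ENNReal

noncomputable def phi (p x : ℝ) : ℝ :=
  if |x| ≤ 1 then x ^ 2 / 2 else |x| ^ p / p - 1 / p + 1 / 2

noncomputable def gam (r c d : ℝ) : ℝ :=
  c ^ 2 / (2 * d) * (r * (2 * (d / c) ^ 2 + 1 / r - 1 / 2)) ^ (1 / r)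

lemma phi_nonneg {p : ℝ} (hp : 1 < p) (x : ℝ) : 0 ≤ phi p x := by
  unfold phi
  split_ifs with h
  · positivity
  · push_neg at h
    have hp0 : (0:ℝ) < p := by linarith
    have h1 : (1:ℝ) ≤ |x| ^ p := Real.one_le_rpow h.le hp0.le
    have h2 : 1 / p ≤ |x| ^ p / p := by gcongr
    linarith

lemma phi_abs (p x : ℝ) : phi p |x| = phi p x := by
  simp [phi, abs_abs, sq_abs]

lemma rpow_two_eq {t : ℝ} : t ^ (2:ℝ) = t ^ 2 := by
  rw [← Real.rpow_natCast t 2]; norm_num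

lemma pow_two_rpow {t q : ℝ} (ht : 0 ≤ t) : (t ^ 2) ^ q = t ^ (2 * q) := by
  rw [Real.rpow_mul ht, rpow_two_eq]

lemma bern {a b q : ℝ} (ha : 0 < a) (hb : 0 ≤ b) (hq : 1 ≤ q) :
    a ^ q + q * b * a ^ (q - 1) ≤ (a + b) ^ q := by
  have hba : (0:ℝ) ≤ b / a := by positivity
  have hs : (-1:ℝ) ≤ b / a := by linarith
  have h := one_add_mul_self_le_rpow_one_add hs hq
  have h2 : (a + b) ^ q = a ^ q * (1 + b / a) ^ q := by
    rw [← Real.mul_rpow ha.le (by positivity)]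
    congr 1
    field_simp
  have h3 : a ^ q * (1 + q * (b / a)) ≤ a ^ q * (1 + b / a) ^ q :=
    mul_le_mul_of_nonneg_left h (Real.rpow_nonneg ha.le q)
  have h4 : a ^ q * (1 + q * (b / a)) = a ^ q + q * b * a ^ (q - 1) := by
    rw [Real.rpow_sub_one ha.ne']
    field_simp
  rw [h2]
  linarith [h3, h4.symm.le]

lemma add_rpow_le {u v q : ℝ} (hu : 0 ≤ u) (hv : 0 ≤ v) (hq : 1 ≤ q) :
    u ^ q + v ^ q ≤ (u + v) ^ q := by
  lift u to ℝ≥0 using hu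
  lift v to ℝ≥0 using hv
  have := NNReal.add_rpow_le_rpow_add u v hq
  exact_mod_cast this

lemma half_sq_le_phi {p t : ℝ} (hp2 : 2 ≤ p) (ht : 0 ≤ t) : t ^ 2 / 2 ≤ phi p t := by
  unfold phi
  rw [abs_of_nonneg ht]
  split_ifs with h
  · exact le_rfl
  · push_neg at h
    have hp0 : (0:ℝ) < p := by linarith
    have key : 1 + p / 2 * (t ^ 2 - 1) ≤ t ^ p := by
      have hb := one_add_mul_self_le_rpow_one_add (s := t ^ 2 - 1) (by nlinarith) (p := p / 2)
        (by linarith)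
      have h2 : (1 + (t ^ 2 - 1)) ^ (p / 2) = t ^ p := by
        have e1 : (1 : ℝ) + (t ^ 2 - 1) = t ^ 2 := by ring
        rw [e1, pow_two_rpow ht]
        congr 1
        ring
      rw [h2] at hb
      linarith
    have h5 : (1 + p / 2 * (t ^ 2 - 1)) / p ≤ t ^ p / p := by gcongr
    have h6 : (1 + p / 2 * (t ^ 2 - 1)) / p = 1 / p + (t ^ 2 - 1) / 2 := by
      field_simp
    linarith

lemma phi_of_le_one {p x : ℝ} (hx : 0 ≤ x) (h : x ≤ 1) : phi p x = x ^ 2 / 2 := by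
  unfold phi
  rw [abs_of_nonneg hx, if_pos h]

lemma phi_of_one_lt {p x : ℝ} (hx : 0 ≤ x) (h : 1 < x) :
    phi p x = x ^ p / p - 1 / p + 1 / 2 := by
  unfold phi
  rw [abs_of_nonneg hx, if_neg (not_le.2 h)]

lemma sq_le_rpow_of_le_one {x p : ℝ} (hx : 0 ≤ x) (hx1 : x ≤ 1) (hp0 : 0 < p) (hp2 : p ≤ 2) :
    x ^ 2 ≤ x ^ p := by
  rcases eq_or_lt_of_le hx with h0 | h0
  · rw [← h0, Real.zero_rpow hp0.ne']
    norm_num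
  · have h2 := Real.rpow_le_rpow_of_exponent_ge h0 hx1 hp2
    rwa [rpow_two_eq] at h2

lemma rpow_rpow_inv_self {x r : ℝ} (hx : 0 ≤ x) (hr : 0 < r) : (x ^ r) ^ (1 / r) = x := by
  rw [one_div, Real.rpow_rpow_inv hx hr.ne']

lemma rpow_p_two_div_p {x p : ℝ} (hx : 0 ≤ x) (hp0 : p ≠ 0) : (x ^ p) ^ (2 / p) = x ^ 2 := by
  rw [← Real.rpow_mul hx, show p * (2 / p) = 2 by field_simp, rpow_two_eq]

lemma half_le_div_p {p A : ℝ} (hp0 : 0 < p) (hp2 : p ≤ 2) (hA : 1 ≤ A) :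
    A / 2 ≤ A / p - 1 / p + 1 / 2 := by
  have h0 : 0 ≤ (A - 1) * (1 / p - 1 / 2) :=
    mul_nonneg (by linarith) (by linarith [one_div_le_one_div_of_le hp0 hp2])
  have h1 : (A - 1) * (1 / p - 1 / 2) = (A / p - 1 / p) - (A / 2 - 1 / 2) := by
    field_simp
  linarith [h1 ▸ h0]

set_option maxHeartbeats 1000000 in
lemma phi_add_le {p : ℝ} (hp : 1 < p) {x y : ℝ} (hx : 0 ≤ x) (hy : 0 ≤ y) :
    phi p x + phi p y ≤ phi p ((x ^ min p 2 + y ^ min p 2) ^ (1 / min p 2)) := by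
  wlog hxy : y ≤ x generalizing x y
  · rw [add_comm (phi p x), add_comm (x ^ min p 2)]
    exact this hy hx (le_of_not_ge hxy)
  set r := min p 2 with hr
  have hr1 : 1 < r := lt_min hp one_lt_two
  have hr0 : 0 < r := by linarith
  have hp0 : (0:ℝ) < p := by linarith
  set s := (x ^ r + y ^ r) ^ (1 / r) with hs
  have hxr : (0:ℝ) ≤ x ^ r := Real.rpow_nonneg hx r
  have hyr : (0:ℝ) ≤ y ^ r := Real.rpow_nonneg hy r
  have hs0 : 0 ≤ s := Real.rpow_nonneg (by linarith) _
  have hsr : s ^ r = x ^ r + y ^ r := by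
    rw [hs, ← Real.rpow_mul (by linarith), one_div_mul_cancel hr0.ne', Real.rpow_one]
  have hsx : x ≤ s := by
    have h1 : (x ^ r) ^ (1 / r) ≤ (x ^ r + y ^ r) ^ (1 / r) :=
      Real.rpow_le_rpow hxr (by linarith) (by positivity)
    rwa [rpow_rpow_inv_self hx hr0] at h1
  clear_value r s
  rcases le_or_gt 2 p with hp2 | hp2
  · -- case 2 ≤ p, r = 2
    have hre : r = 2 := hr.trans (min_eq_right hp2)
    have hs2 : s ^ 2 = x ^ 2 + y ^ 2 := by
      have h := hsr
      rw [hre] at h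
      rw [← rpow_two_eq, h, rpow_two_eq, rpow_two_eq]
    rcases le_or_gt x 1 with hx1 | hx1
    · rw [phi_of_le_one hx hx1, phi_of_le_one hy (le_trans hxy hx1)]
      calc x ^ 2 / 2 + y ^ 2 / 2 = s ^ 2 / 2 := by rw [hs2]; ring
        _ ≤ phi p s := half_sq_le_phi hp2 hs0
    · have hx0 : (0:ℝ) < x := by linarith
      have hs1 : 1 < s := lt_of_lt_of_le hx1 hsx
      rw [phi_of_one_lt hx hx1, phi_of_one_lt hs0 hs1]
      have hb := bern (a := x ^ 2) (b := y ^ 2) (q := p / 2) (by positivity) (sq_nonneg y)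
        (by linarith)
      have e1 : (x ^ 2) ^ (p / 2) = x ^ p := by rw [pow_two_rpow hx]; congr 1; ring
      have e2 : (x ^ 2) ^ (p / 2 - 1) = x ^ (p - 2) := by
        rw [pow_two_rpow hx]; congr 1; ring
      have e3 : (x ^ 2 + y ^ 2) ^ (p / 2) = s ^ p := by
        rw [← hs2, pow_two_rpow hs0]; congr 1; ring
      rw [e1, e2, e3] at hb
      have hX1 : (1:ℝ) ≤ x ^ (p - 2) := Real.one_le_rpow hx1.le (by linarith)
      have hXpos : (0:ℝ) ≤ x ^ (p - 2) := by linarith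
      rcases le_or_gt y 1 with hy1 | hy1
      · rw [phi_of_le_one hy hy1]
        have h5 : y ^ 2 / 2 ≤ s ^ p / p - x ^ p / p := by
          rw [← sub_div, le_div_iff₀ hp0]
          nlinarith [mul_nonneg (mul_nonneg (by linarith : (0:ℝ) ≤ p / 2) (sq_nonneg y))
            (by linarith : (0:ℝ) ≤ x ^ (p - 2) - 1)]
        linarith
      · have hy0 : (0:ℝ) < y := by linarith
        rw [phi_of_one_lt hy hy1]
        have hXY : y ^ (p - 2) ≤ x ^ (p - 2) := Real.rpow_le_rpow hy0.le hxy (by linarith)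
        have e4 : y ^ 2 * y ^ (p - 2) = y ^ p := by
          rw [← rpow_two_eq, ← Real.rpow_add hy0]; congr 1; ring
        have hyp1 : (1:ℝ) ≤ y ^ p := Real.one_le_rpow hy1.le hp0.le
        have hA : 0 ≤ p / 2 * y ^ 2 * (x ^ (p - 2) - y ^ (p - 2)) :=
          mul_nonneg (mul_nonneg (by linarith) (sq_nonneg y)) (by linarith)
        have hc : p / 2 * y ^ 2 * y ^ (p - 2) = p / 2 * y ^ p := by
          rw [mul_assoc, e4]
        have hd : 0 ≤ (p / 2 - 1) * (y ^ p - 1) :=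
          mul_nonneg (by linarith) (by linarith)
        have h5 : y ^ p - 1 + p / 2 ≤ s ^ p - x ^ p := by nlinarith [hA, hc, hd, hb]
        have h6 : (y ^ p - 1 + p / 2) / p ≤ (s ^ p - x ^ p) / p := by gcongr
        have h7 : (y ^ p - 1 + p / 2) / p = y ^ p / p - 1 / p + 1 / 2 := by
          field_simp
        rw [h7] at h6
        rw [show s ^ p / p - 1 / p + 1 / 2 =
          (s ^ p - x ^ p) / p + (x ^ p / p - 1 / p + 1 / 2) by rw [sub_div]; ring]
        linarith
  · -- case p < 2, r = p
    have hre : r = p := hr.trans (min_eq_left hp2.le)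
    have hsp : s ^ p = x ^ p + y ^ p := by rw [← hre]; exact hsr
    have hq1 : (1:ℝ) ≤ 2 / p := (one_le_div hp0).2 hp2.le
    have hhalf : (1:ℝ) / 2 ≤ 1 / p := one_div_le_one_div_of_le hp0 hp2.le
    rcases le_or_gt x 1 with hx1 | hx1
    · have hy1 : y ≤ 1 := le_trans hxy hx1
      rw [phi_of_le_one hx hx1, phi_of_le_one hy hy1]
      have kx : (x ^ p) ^ (2 / p) = x ^ 2 := rpow_p_two_div_p hx hp0.ne'
      have ky : (y ^ p) ^ (2 / p) = y ^ 2 := rpow_p_two_div_p hy hp0.ne'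
      rcases le_or_gt s 1 with hs1 | hs1
      · rw [phi_of_le_one hs0 hs1]
        have hxp : (0:ℝ) ≤ x ^ p := Real.rpow_nonneg hx p
        have hyp : (0:ℝ) ≤ y ^ p := Real.rpow_nonneg hy p
        have h1 : x ^ 2 + y ^ 2 ≤ s ^ 2 := by
          rw [← kx, ← ky, ← rpow_p_two_div_p hs0 hp0.ne', hsp]
          exact add_rpow_le hxp hyp hq1
        linarith
      · rw [phi_of_one_lt hs0 hs1]
        have hsp1 : (1:ℝ) ≤ s ^ p := Real.one_le_rpow hs1.le hp0.le
        have hx2 : x ^ 2 ≤ x ^ p := sq_le_rpow_of_le_one hx hx1 hp0 hp2.le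
        have hy2 : y ^ 2 ≤ y ^ p := sq_le_rpow_of_le_one hy hy1 hp0 hp2.le
        have key : s ^ p / 2 ≤ s ^ p / p - 1 / p + 1 / 2 :=
          half_le_div_p hp0 hp2.le hsp1
        have : x ^ p / 2 + y ^ p / 2 = s ^ p / 2 := by rw [hsp]; ring
        linarith
    · have hs1 : 1 < s := lt_of_lt_of_le hx1 hsx
      rw [phi_of_one_lt hx hx1, phi_of_one_lt hs0 hs1]
      have key : phi p y ≤ y ^ p / p := by
        rcases le_or_gt y 1 with hy1 | hy1
        · rw [phi_of_le_one hy hy1]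
          have h1 : y ^ 2 ≤ y ^ p := sq_le_rpow_of_le_one hy hy1 hp0 hp2.le
          have hyp : (0:ℝ) ≤ y ^ p := Real.rpow_nonneg hy p
          have h2 : y ^ p / 2 ≤ y ^ p / p := by
            rw [div_le_div_iff₀ (by norm_num : (0:ℝ) < 2) hp0]
            exact mul_le_mul_of_nonneg_left hp2.le hyp
          linarith
        · rw [phi_of_one_lt hy hy1]
          have hyp1 : (1:ℝ) ≤ y ^ p := Real.one_le_rpow hy1.le hp0.le
          have hyp : (0:ℝ) ≤ y ^ p := Real.rpow_nonneg hy p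
          have h2 : y ^ p / 2 ≤ y ^ p / p := by
            rw [div_le_div_iff₀ (by norm_num : (0:ℝ) < 2) hp0]
            exact mul_le_mul_of_nonneg_left hp2.le hyp
          linarith
      rw [hsp, add_div]
      linarith

lemma gam_eq_of_ge_two {c D : ℝ} (hc : 0 < c) (hD : 0 < D) : gam 2 c D = c := by
  unfold gam
  have e1 : 2 * (2 * (D / c) ^ 2 + 1 / 2 - 1 / 2) = (2 * (D / c)) ^ 2 := by ring
  rw [e1, pow_two_rpow (by positivity), show (2:ℝ) * (1 / 2) = 1 by norm_num, Real.rpow_one]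
  field_simp

set_option maxHeartbeats 1000000 in
lemma min_le_phi_gam {p c D lam : ℝ} (hp : 1 < p) (hc : 0 < c) (hcD : c ≤ D) (hl : 0 ≤ lam) :
    min (lam ^ 2 * c ^ 2 / 2) (lam * D) ≤ phi p (gam (min p 2) c D * lam) := by
  have hD : 0 < D := lt_of_lt_of_le hc hcD
  have hp0 : (0:ℝ) < p := by linarith
  rcases le_or_gt 2 p with hp2 | hp2
  · rw [min_eq_right hp2, gam_eq_of_ge_two hc hD]
    refine le_trans (min_le_left _ _) ?_
    calc lam ^ 2 * c ^ 2 / 2 = (c * lam) ^ 2 / 2 := by ring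
      _ ≤ phi p (c * lam) := half_sq_le_phi hp2 (by positivity)
  · rw [min_eq_left hp2.le]
    have hdc1 : (1:ℝ) ≤ D / c := (one_le_div hc).2 hcD
    obtain ⟨q, hq⟩ : ∃ q : ℝ, q = (D / c) ^ 2 := ⟨_, rfl⟩
    have hq1 : 1 ≤ q := by rw [hq]; nlinarith
    have hqe : 2 * D ^ 2 / c ^ 2 = 2 * q := by rw [hq, div_pow]; ring
    obtain ⟨K, hK⟩ : ∃ K : ℝ, K = p * (2 * (D / c) ^ 2 + 1 / p - 1 / 2) := ⟨_, rfl⟩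
    have hKval : K = 2 * p * q + 1 - p / 2 := by rw [hK, hq]; field_simp
    have hK1 : 1 < K := by nlinarith
    have hK0 : 0 < K := by linarith
    have hKQ : 2 * D ^ 2 / c ^ 2 ≤ K := by rw [hqe]; nlinarith
    obtain ⟨T, hT⟩ : ∃ T : ℝ, T = K ^ (1 / p) := ⟨_, rfl⟩
    have hT1 : 1 < T := by rw [hT]; exact Real.one_lt_rpow hK1 (by positivity)
    have hT0 : 0 < T := by linarith
    have hTp : T ^ p = K := by
      rw [hT, ← Real.rpow_mul hK0.le, one_div_mul_cancel hp0.ne', Real.rpow_one]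
    obtain ⟨γ, hγ⟩ : ∃ g : ℝ, g = c ^ 2 / (2 * D) * T := ⟨_, rfl⟩
    have hgam : gam p c D = γ := by rw [hγ, gam, ← hK, ← hT]
    rw [hgam]
    have hγpos : 0 < γ := by rw [hγ]; positivity
    have hid : K / p - 1 / p + 1 / 2 = 2 * D ^ 2 / c ^ 2 := by
      rw [hKval, hqe, hq]
      field_simp
      ring
    obtain ⟨lam0, hlam0⟩ : ∃ l : ℝ, l = 2 * D / c ^ 2 := ⟨_, rfl⟩
    have hlam0pos : 0 < lam0 := by rw [hlam0]; positivity
    have hγlam0 : γ * lam0 = T := by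
      rw [hγ, hlam0]
      field_simp
    have hDlam0 : D * lam0 = 2 * D ^ 2 / c ^ 2 := by rw [hlam0]; field_simp
    -- c ≤ γ
    have h2p : (2:ℝ) ^ p ≤ 2 * p := by
      have hb := rpow_one_add_le_one_add_mul_self (s := 1) (by norm_num) (p := p - 1)
        (by linarith) (by linarith)
      have e2 : ((1:ℝ) + 1) ^ (p - 1) = 2 ^ (p - 1) := by norm_num
      have e3 : (2:ℝ) ^ p = 2 ^ (p - 1) * 2 := by
        rw [← Real.rpow_add_one (by norm_num : (2:ℝ) ≠ 0) (p - 1)]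
        norm_num
      rw [e2] at hb
      nlinarith
    have hdcp : (D / c) ^ p ≤ q := by
      have h4 := Real.rpow_le_rpow_of_exponent_le hdc1 hp2.le
      rw [rpow_two_eq, ← hq] at h4
      exact h4
    have h2Dcp : (2 * D / c) ^ p ≤ K := by
      have e4 : (2 * D / c) ^ p = 2 ^ p * (D / c) ^ p := by
        rw [← Real.mul_rpow (by norm_num) (by positivity)]
        congr 1
        ring
      have h6 : (0:ℝ) ≤ (D / c) ^ p := Real.rpow_nonneg (by positivity) p
      rw [e4, hKval]
      nlinarith
    have hcγ : c ≤ γ := by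
      have h7 : 2 * D / c ≤ T := by
        have h8 := Real.rpow_le_rpow (by positivity : (0:ℝ) ≤ (2 * D / c) ^ p) h2Dcp
          (by positivity : (0:ℝ) ≤ 1 / p)
        rwa [rpow_rpow_inv_self (by positivity) hp0, ← hT] at h8
      rw [hγ]
      calc c = c ^ 2 / (2 * D) * (2 * D / c) := by field_simp
        _ ≤ c ^ 2 / (2 * D) * T := by
            apply mul_le_mul_of_nonneg_left h7
            positivity
    rcases le_or_gt (γ * lam) 1 with h1 | h1
    · refine le_trans (min_le_left _ _) ?_
      rw [phi_of_le_one (mul_nonneg hγpos.le hl) h1]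
      have h9 : c * lam ≤ γ * lam := mul_le_mul_of_nonneg_right hcγ hl
      have h10 : (c * lam) ^ 2 / 2 ≤ (γ * lam) ^ 2 / 2 := by
        have := pow_le_pow_left₀ (by positivity : (0:ℝ) ≤ c * lam) h9 2
        linarith
      calc lam ^ 2 * c ^ 2 / 2 = (c * lam) ^ 2 / 2 := by ring
        _ ≤ (γ * lam) ^ 2 / 2 := h10
    · obtain ⟨t, ht⟩ : ∃ t : ℝ, t = γ * lam := ⟨_, rfl⟩
      rw [← ht] at h1 ⊢
      have ht0 : 0 < t := by linarith
      rcases le_or_gt lam lam0 with h2 | h2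
      · -- chord case
        refine le_trans (min_le_left _ _) ?_
        rw [phi_of_one_lt ht0.le h1]
        have htT : t ≤ T := by
          rw [← hγlam0, ht]
          exact mul_le_mul_of_nonneg_left h2 hγpos.le
        obtain ⟨u, hu⟩ : ∃ u : ℝ, u = t ^ p := ⟨_, rfl⟩
        rw [← hu]
        have hu1 : 1 < u := by rw [hu]; exact Real.one_lt_rpow h1 hp0
        have huK : u ≤ K := by
          rw [hu, ← hTp]
          exact Real.rpow_le_rpow ht0.le htT hp0.le
        obtain ⟨a, ha'⟩ : ∃ a : ℝ, a = (K - u) / (K - 1) := ⟨_, rfl⟩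
        obtain ⟨b, hb'⟩ : ∃ b : ℝ, b = (u - 1) / (K - 1) := ⟨_, rfl⟩
        have hKm1 : (0:ℝ) < K - 1 := by linarith
        have ha : 0 ≤ a := by rw [ha']; apply div_nonneg <;> linarith
        have hb : 0 ≤ b := by rw [hb']; apply div_nonneg <;> linarith
        have hab : a + b = 1 := by rw [ha', hb']; field_simp; ring
        have hcomb : a + b * K = u := by rw [ha', hb']; field_simp; ring
        have hq2p : (1:ℝ) ≤ 2 / p := (one_le_div hp0).2 hp2.le
        have hconv := (convexOn_rpow hq2p).2 (Set.mem_Ici.2 (by norm_num : (0:ℝ) ≤ 1))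
          (Set.mem_Ici.2 hK0.le) ha hb hab
        simp only [smul_eq_mul, Real.one_rpow, mul_one] at hconv
        rw [hcomb] at hconv
        have hut : u ^ (2 / p) = t ^ 2 := by rw [hu]; exact rpow_p_two_div_p ht0.le hp0.ne'
        have hKT : K ^ (2 / p) = T ^ 2 := by rw [← hTp]; exact rpow_p_two_div_p hT0.le hp0.ne'
        rw [hut, hKT] at hconv
        obtain ⟨α, hα⟩ : ∃ al : ℝ, al = c ^ 2 / γ ^ 2 := ⟨_, rfl⟩
        have hα0 : 0 ≤ α := by rw [hα]; positivity
        have hα1 : α ≤ 1 := by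
          rw [hα, div_le_one (by positivity)]
          exact pow_le_pow_left₀ hc.le hcγ 2
        have hlamt : lam ^ 2 * c ^ 2 / 2 = α * t ^ 2 / 2 := by
          rw [hα, ht]
          field_simp
        have HK : α * T ^ 2 / 2 = K / p - 1 / p + 1 / 2 := by
          rw [hid, hα, ← hγlam0, hlam0]
          field_simp
        rw [hlamt]
        have step1 : α * t ^ 2 / 2 ≤ α * (a + b * T ^ 2) / 2 := by
          have h20 := mul_le_mul_of_nonneg_left hconv hα0
          linarith
        have step2 : α * (a + b * T ^ 2) / 2 = a * (α / 2) + b * (α * T ^ 2 / 2) := by ring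
        have step3 : a * (α / 2) ≤ a * (1 / 2) := by
          apply mul_le_mul_of_nonneg_left _ ha
          linarith
        have step4 : b * (α * T ^ 2 / 2) = b * (K / p - 1 / p + 1 / 2) := by rw [HK]
        have step5 : a * (1 / 2) + b * (K / p - 1 / p + 1 / 2) = u / p - 1 / p + 1 / 2 := by
          rw [← hcomb]
          linear_combination (1 / 2 - 1 / p) * hab
        linarith
      · -- linear case
        refine le_trans (min_le_right _ _) ?_
        rw [phi_of_one_lt ht0.le h1]
        have hTt : T ≤ t := by
          rw [← hγlam0, ht]
          exact mul_le_mul_of_nonneg_left h2.le hγpos.le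
        have hbern := bern (a := T) (b := t - T) (q := p) hT0 (by linarith) hp.le
        have e5 : T + (t - T) = t := by ring
        rw [e5, hTp, Real.rpow_sub_one hT0.ne', hTp] at hbern
        have e6 : (t - T) * (K / T) = K * (lam - lam0) / lam0 := by
          rw [ht, ← hγlam0]
          field_simp
        have hKlam0 : D ≤ K / lam0 := by
          rw [le_div_iff₀ hlam0pos]
          linarith [hDlam0, hKQ]
        have e7 : D * (lam - lam0) ≤ K * (lam - lam0) / lam0 := by
          calc D * (lam - lam0) ≤ (K / lam0) * (lam - lam0) :=
                mul_le_mul_of_nonneg_right hKlam0 (by linarith)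
            _ = K * (lam - lam0) / lam0 := by ring
        have h9 : K / p + (t - T) * (K / T) ≤ t ^ p / p := by
          have h10 : (K + p * ((t - T) * (K / T))) / p ≤ t ^ p / p := by
            gcongr
            linarith [hbern]
          have h11 : (K + p * ((t - T) * (K / T))) / p = K / p + (t - T) * (K / T) := by
            field_simp
          linarith
        have h12 : lam * D = D * lam0 + D * (lam - lam0) := by ring
        linarith [hid, e6, e7, h9]

section Prob

variable {Ω : Type*} {m : MeasurableSpace Ω} {μ : Measure Ω} [IsProbabilityMeasure μ]
  {ℱ : Filtration ℕ m} {ξ : ℕ → Ω → ℝ}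

lemma exp_mul_meas (hmart : Martingale ξ ℱ μ) (l : ℝ) (k : ℕ) :
    StronglyMeasurable (fun ω => Real.exp (l * ξ k ω)) :=
  Real.continuous_exp.comp_stronglyMeasurable
    (((hmart.stronglyMeasurable k).mono (ℱ.le k)).const_mul l)

set_option maxHeartbeats 1000000 in
lemma azuma_step (hmart : Martingale ξ ℱ μ) {k : ℕ} {dk l : ℝ} (hdk : 0 < dk)
    (hbd : ∀ᵐ ω ∂μ, |ξ (k + 1) ω - ξ k ω| ≤ dk)
    (hint : Integrable (fun ω => Real.exp (l * ξ (k + 1) ω)) μ) :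
    Integrable (fun ω => Real.exp (l * ξ k ω)) μ ∧
    ∫ ω, Real.exp (l * ξ (k + 1) ω) ∂μ ≤
      Real.exp (l ^ 2 * dk ^ 2 / 2) * ∫ ω, Real.exp (l * ξ k ω) ∂μ := by
  set g : Ω → ℝ := fun ω => Real.exp (l * ξ k ω) with hg
  set X : Ω → ℝ := fun ω => ξ (k + 1) ω - ξ k ω with hX
  set f : Ω → ℝ := fun ω => Real.exp (l * X ω) with hf
  have hGsm : StronglyMeasurable[ℱ k] g :=
    Real.continuous_exp.comp_stronglyMeasurable ((hmart.stronglyMeasurable k).const_mul l)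
  have hgmeas : AEStronglyMeasurable g μ := (exp_mul_meas hmart l k).aestronglyMeasurable
  have hfmeas : AEStronglyMeasurable f μ := by
    apply (Real.continuous_exp.comp_stronglyMeasurable _).aestronglyMeasurable
    exact ((((hmart.stronglyMeasurable (k + 1)).mono (ℱ.le (k + 1))).sub
      ((hmart.stronglyMeasurable k).mono (ℱ.le k))).const_mul l)
  -- integrability of g
  have hgint : Integrable g μ := by
    apply Integrable.mono' (hint.const_mul (Real.exp (|l| * dk))) hgmeas
    filter_upwards [hbd] with ω hω
    rw [hg, Real.norm_eq_abs, abs_of_nonneg (Real.exp_pos _).le, ← Real.exp_add]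
    apply Real.exp_le_exp.2
    have h1 : l * ξ k ω - l * ξ (k + 1) ω ≤ |l| * dk := by
      calc l * ξ k ω - l * ξ (k + 1) ω ≤ |l * ξ k ω - l * ξ (k + 1) ω| := le_abs_self _
        _ = |l| * |ξ (k + 1) ω - ξ k ω| := by
            rw [show l * ξ k ω - l * ξ (k + 1) ω = -(l * (ξ (k + 1) ω - ξ k ω)) by ring,
              abs_neg, abs_mul]
        _ ≤ |l| * dk := mul_le_mul_of_nonneg_left hω (abs_nonneg l)
    linarith
  -- integrability of X and f
  have hXint : Integrable X μ := (hmart.integrable (k + 1)).sub (hmart.integrable k)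
  have hfbd : ∀ᵐ ω ∂μ, ‖f ω‖ ≤ Real.exp (|l| * dk) := by
    filter_upwards [hbd] with ω hω
    rw [hf, Real.norm_eq_abs, abs_of_nonneg (Real.exp_pos _).le]
    apply Real.exp_le_exp.2
    calc l * X ω ≤ |l * X ω| := le_abs_self _
      _ = |l| * |X ω| := abs_mul l (X ω)
      _ ≤ |l| * dk := mul_le_mul_of_nonneg_left hω (abs_nonneg l)
  have hfint : Integrable f μ := Integrable.mono' (integrable_const _) hfmeas hfbd
  -- conditional expectation of X is zero
  have hXcond : μ[X|ℱ k] =ᵐ[μ] 0 := by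
    have h1 : μ[ξ (k + 1)|ℱ k] =ᵐ[μ] ξ k := hmart.condExp_ae_eq (Nat.le_succ k)
    have h2 : μ[ξ k|ℱ k] =ᵐ[μ] ξ k := by
      rw [condExp_of_stronglyMeasurable (ℱ.le k) (hmart.stronglyMeasurable k)
        (hmart.integrable k)]
    have h3 := condExp_sub (μ := μ) (m := ℱ k) (hmart.integrable (k + 1)) (hmart.integrable k)
    refine h3.trans ?_
    filter_upwards [h1, h2] with ω e1 e2
    simp [e1, e2]
  -- Hoeffding: pointwise convexity bound
  set c1 : ℝ := (Real.exp (l * dk) + Real.exp (-(l * dk))) / 2 with hc1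
  set c2 : ℝ := (Real.exp (l * dk) - Real.exp (-(l * dk))) / (2 * dk) with hc2
  have hptw : ∀ᵐ ω ∂μ, f ω ≤ c1 + c2 * X ω := by
    filter_upwards [hbd] with ω hω
    have habs := abs_le.1 hω
    have hXω : X ω = ξ (k + 1) ω - ξ k ω := rfl
    have ha : (0:ℝ) ≤ (dk - X ω) / (2 * dk) := by
      apply div_nonneg _ (by linarith)
      rw [hXω]
      linarith [habs.2]
    have hb : (0:ℝ) ≤ (dk + X ω) / (2 * dk) := by
      apply div_nonneg _ (by linarith)
      rw [hXω]
      linarith [habs.1]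
    have hab : (dk - X ω) / (2 * dk) + (dk + X ω) / (2 * dk) = 1 := by field_simp; ring
    have hcx := convexOn_exp.2 (Set.mem_univ (-(l * dk))) (Set.mem_univ (l * dk)) ha hb hab
    simp only [smul_eq_mul] at hcx
    have e1 : (dk - X ω) / (2 * dk) * -(l * dk) + (dk + X ω) / (2 * dk) * (l * dk) = l * X ω := by
      field_simp
      ring
    have e2 : (dk - X ω) / (2 * dk) * Real.exp (-(l * dk)) +
        (dk + X ω) / (2 * dk) * Real.exp (l * dk) = c1 + c2 * X ω := by
      rw [hc1, hc2]
      field_simp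
      ring
    rw [e1, e2] at hcx
    exact hcx
  -- conditional bound
  have hC : c1 ≤ Real.exp (l ^ 2 * dk ^ 2 / 2) := by
    have := Real.cosh_le_exp_half_sq (l * dk)
    rw [Real.cosh_eq] at this
    calc c1 = (Real.exp (l * dk) + Real.exp (-(l * dk))) / 2 := hc1
      _ ≤ Real.exp ((l * dk) ^ 2 / 2) := this
      _ = Real.exp (l ^ 2 * dk ^ 2 / 2) := by congr 1; ring
  have hlinint : Integrable (fun ω => c1 + c2 * X ω) μ :=
    (integrable_const c1).add (hXint.const_mul c2)
  have hcond_le : μ[f|ℱ k] ≤ᵐ[μ] fun _ => Real.exp (l ^ 2 * dk ^ 2 / 2) := by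
    have h1 : μ[f|ℱ k] ≤ᵐ[μ] μ[fun ω => c1 + c2 * X ω|ℱ k] := condExp_mono hfint hlinint hptw
    have h2 : μ[fun ω => c1 + c2 * X ω|ℱ k] =ᵐ[μ] fun _ => c1 := by
      have ha := condExp_add (μ := μ) (m := ℱ k) (integrable_const c1) (hXint.const_mul c2)
      have hsm := condExp_smul (μ := μ) (m := ℱ k) c2 X
      have hcc : μ[fun _ => c1|ℱ k] = fun _ => c1 := condExp_const (ℱ.le k) c1
      have heq : (fun ω => c1 + c2 * X ω) = (fun _ => c1) + fun ω => c2 * X ω := rfl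
      rw [heq]
      refine ha.trans ?_
      filter_upwards [hsm, hXcond] with ω e1 e2
      have hx1 : (μ[fun ω => c2 * X ω|ℱ k]) ω = (μ[c2 • X|ℱ k]) ω := rfl
      have hx2 : (c2 • μ[X|ℱ k]) ω = c2 * (μ[X|ℱ k]) ω := rfl
      simp only [Pi.add_apply, hcc, hx1, e1, hx2, e2, Pi.zero_apply, mul_zero, add_zero]
    filter_upwards [h1, h2] with ω e1 e2
    rw [e2] at e1
    exact le_trans e1 hC
  -- main chain
  have hprod : (fun ω => Real.exp (l * ξ (k + 1) ω)) = g * f := by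
    funext ω
    simp only [Pi.mul_apply, hg, hf, hX, ← Real.exp_add]
    congr 1
    ring
  have hgfint : Integrable (g * f) μ := by rw [← hprod]; exact hint
  have e3 : ∫ ω, Real.exp (l * ξ (k + 1) ω) ∂μ = ∫ ω, (g * f) ω ∂μ := by rw [hprod]
  have e4 : ∫ ω, (g * f) ω ∂μ = ∫ ω, (μ[g * f|ℱ k]) ω ∂μ := (integral_condExp (ℱ.le k)).symm
  have e5 : μ[g * f|ℱ k] =ᵐ[μ] g * μ[f|ℱ k] := condExp_mul_of_stronglyMeasurable_left hGsm hgfint hfint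
  have e6 : ∫ ω, (μ[g * f|ℱ k]) ω ∂μ = ∫ ω, g ω * (μ[f|ℱ k]) ω ∂μ :=
    integral_congr_ae (e5.mono fun ω h => by rw [h]; rfl)
  have e7 : ∫ ω, g ω * (μ[f|ℱ k]) ω ∂μ ≤ ∫ ω, g ω * Real.exp (l ^ 2 * dk ^ 2 / 2) ∂μ := by
    apply integral_mono_ae
    · exact integrable_condExp.congr ((e5.mono fun ω h => by rw [h]; rfl))
    · exact hgint.mul_const _
    · filter_upwards [hcond_le] with ω hω
      exact mul_le_mul_of_nonneg_left hω (Real.exp_pos _).le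
  have e8 : ∫ ω, g ω * Real.exp (l ^ 2 * dk ^ 2 / 2) ∂μ =
      Real.exp (l ^ 2 * dk ^ 2 / 2) * ∫ ω, g ω ∂μ := by
    rw [integral_mul_const]
    ring
  exact ⟨hgint, by rw [e3, e4, e6]; rw [e8] at e7; exact e7⟩

end Prob

lemma gam_nonneg {r c D : ℝ} (hr1 : 1 ≤ r) (hr2 : r ≤ 2) (hD : 0 < D) : 0 ≤ gam r c D := by
  rw [gam]
  apply mul_nonneg (by positivity)
  apply Real.rpow_nonneg
  have hr0 : 0 < r := by linarith
  have h1 : r * (2 * (D / c) ^ 2 + 1 / r - 1 / 2) = 2 * r * (D / c) ^ 2 + 1 - r / 2 := by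
    field_simp
  rw [h1]
  nlinarith [sq_nonneg (D / c)]

section Chain

variable {Ω : Type*} {m : MeasurableSpace Ω} {μ : Measure Ω} [IsProbabilityMeasure μ]
  {ℱ : Filtration ℕ m} {ξ : ℕ → Ω → ℝ}

lemma azuma_chain (hmart : Martingale ξ ℱ μ) (d : ℕ → ℝ) (l : ℝ) :
    ∀ n : ℕ, (∀ i, i < n → 0 < d (i + 1)) →
      (∀ i, ∀ᵐ ω ∂μ, |ξ (i + 1) ω - ξ i ω| ≤ d (i + 1)) →
      Integrable (fun ω => Real.exp (l * ξ n ω)) μ →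
      Integrable (fun ω => Real.exp (l * ξ 0 ω)) μ ∧
        ∫ ω, Real.exp (l * ξ n ω) ∂μ ≤
          Real.exp (l ^ 2 * (∑ i ∈ Finset.range n, d (i + 1) ^ 2) / 2) *
            ∫ ω, Real.exp (l * ξ 0 ω) ∂μ
  | 0, _, _, hint => ⟨hint, by simp⟩
  | (n + 1), hd, hb, hint => by
      obtain ⟨hk_int, hstep⟩ := azuma_step hmart (hd n (Nat.lt_succ_self n)) (hb n) hint
      obtain ⟨h0, hrec⟩ := azuma_chain hmart d l n
        (fun i hi => hd i (hi.trans (Nat.lt_succ_self n))) hb hk_int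
      refine ⟨h0, ?_⟩
      calc ∫ ω, Real.exp (l * ξ (n + 1) ω) ∂μ
          ≤ Real.exp (l ^ 2 * d (n + 1) ^ 2 / 2) * ∫ ω, Real.exp (l * ξ n ω) ∂μ := hstep
        _ ≤ Real.exp (l ^ 2 * d (n + 1) ^ 2 / 2) *
            (Real.exp (l ^ 2 * (∑ i ∈ Finset.range n, d (i + 1) ^ 2) / 2) *
              ∫ ω, Real.exp (l * ξ 0 ω) ∂μ) :=
            mul_le_mul_of_nonneg_left hrec (Real.exp_pos _).le
        _ = Real.exp (l ^ 2 * (∑ i ∈ Finset.range (n + 1), d (i + 1) ^ 2) / 2) *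
            ∫ ω, Real.exp (l * ξ 0 ω) ∂μ := by
            rw [← mul_assoc, ← Real.exp_add, Finset.sum_range_succ]
            congr 2
            ring

end Chain

set_option maxHeartbeats 1000000 in
theorem stmt_18 {Ω : Type*} {m : MeasurableSpace Ω} (μ : Measure Ω) [IsProbabilityMeasure μ]
    (p : ℝ) (hp : 1 < p)
    (ℱ : Filtration ℕ m) (ξ : ℕ → Ω → ℝ) (hmart : Martingale ξ ℱ μ)
    (d : ℕ → ℝ) (d₀ : ℝ) (hd₀ : 0 ≤ d₀)
    (n : ℕ) (hn : 1 ≤ n) (hdpos : ∀ i ∈ Finset.Icc 1 n, 0 < d i)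
    (hξ₀ : ∀ l : ℝ, Real.log (∫ ω, Real.exp (l * ξ 0 ω) ∂μ) ≤ phi p (d₀ * l))
    (hincr : ∀ i : ℕ, ∀ᵐ ω ∂μ, |ξ (i + 1) ω - ξ i ω| ≤ d (i + 1)) :
    ∀ l : ℝ, Real.log (∫ ω, Real.exp (l * ξ n ω) ∂μ) ≤
      phi p (l *
        (gam (min p 2) (Real.sqrt (∑ i ∈ Finset.Icc 1 n, d i ^ 2)) (∑ i ∈ Finset.Icc 1 n, d i)
            ^ min p 2 + d₀ ^ min p 2) ^ (1 / min p 2)) := by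
  intro l
  have hr1 : 1 < min p 2 := lt_min hp one_lt_two
  have hr0 : 0 < min p 2 := by linarith
  by_cases hint : Integrable (fun ω => Real.exp (l * ξ n ω)) μ
  swap
  · rw [integral_undef hint, Real.log_zero]
    exact phi_nonneg hp _
  -- sums
  have hC2pos : 0 < ∑ i ∈ Finset.Icc 1 n, d i ^ 2 := by
    apply Finset.sum_pos (fun i hi => pow_pos (hdpos i hi) 2)
    exact ⟨1, Finset.mem_Icc.2 ⟨le_refl 1, hn⟩⟩
  have hDpos : 0 < ∑ i ∈ Finset.Icc 1 n, d i := by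
    apply Finset.sum_pos (fun i hi => hdpos i hi)
    exact ⟨1, Finset.mem_Icc.2 ⟨le_refl 1, hn⟩⟩
  have hIcc_range : ∀ f : ℕ → ℝ, ∑ i ∈ Finset.Icc 1 n, f i = ∑ i ∈ Finset.range n, f (i + 1) := by
    intro f
    rw [← Finset.Ico_add_one_right_eq_Icc, Finset.sum_Ico_eq_sum_range]
    simp [add_comm]
  -- Azuma chain
  obtain ⟨h0int, hquad0⟩ := azuma_chain hmart d l n
    (fun i hi => hdpos (i + 1) (Finset.mem_Icc.2 ⟨Nat.succ_le_succ (Nat.zero_le i),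
      Nat.succ_le_of_lt hi⟩)) hincr hint
  have hquad : ∫ ω, Real.exp (l * ξ n ω) ∂μ ≤
      Real.exp (l ^ 2 * (∑ i ∈ Finset.Icc 1 n, d i ^ 2) / 2) * ∫ ω, Real.exp (l * ξ 0 ω) ∂μ := by
    rw [hIcc_range (fun i => d i ^ 2)]
    exact hquad0
  -- linear bound
  have htel : ∀ᵐ ω ∂μ, |ξ n ω - ξ 0 ω| ≤ ∑ i ∈ Finset.Icc 1 n, d i := by
    have hae := ae_all_iff.2 hincr
    filter_upwards [hae] with ω hω
    have e1 : ξ n ω - ξ 0 ω = ∑ i ∈ Finset.range n, (ξ (i + 1) ω - ξ i ω) :=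
      (Finset.sum_range_sub (fun i => ξ i ω) n).symm
    rw [e1, hIcc_range d]
    calc |∑ i ∈ Finset.range n, (ξ (i + 1) ω - ξ i ω)|
        ≤ ∑ i ∈ Finset.range n, |ξ (i + 1) ω - ξ i ω| := Finset.abs_sum_le_sum_abs _ _
      _ ≤ ∑ i ∈ Finset.range n, d (i + 1) := Finset.sum_le_sum fun i _ => hω i
  have hlin : ∫ ω, Real.exp (l * ξ n ω) ∂μ ≤
      Real.exp (|l| * ∑ i ∈ Finset.Icc 1 n, d i) * ∫ ω, Real.exp (l * ξ 0 ω) ∂μ := by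
    rw [← integral_const_mul]
    apply integral_mono_ae hint (h0int.const_mul _)
    filter_upwards [htel] with ω hω
    rw [← Real.exp_add]
    apply Real.exp_le_exp.2
    have h1 : l * ξ n ω - l * ξ 0 ω ≤ |l| * ∑ i ∈ Finset.Icc 1 n, d i := by
      calc l * ξ n ω - l * ξ 0 ω ≤ |l * ξ n ω - l * ξ 0 ω| := le_abs_self _
        _ = |l| * |ξ n ω - ξ 0 ω| := by
            rw [show l * ξ n ω - l * ξ 0 ω = l * (ξ n ω - ξ 0 ω) by ring, abs_mul]
        _ ≤ |l| * ∑ i ∈ Finset.Icc 1 n, d i := mul_le_mul_of_nonneg_left hω (abs_nonneg l)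
    linarith
  -- positivity of integrals
  have hpos_n : 0 < ∫ ω, Real.exp (l * ξ n ω) ∂μ := integral_exp_pos hint
  have hpos_0 : 0 < ∫ ω, Real.exp (l * ξ 0 ω) ∂μ := integral_exp_pos h0int
  -- min bound
  have hM : ∫ ω, Real.exp (l * ξ n ω) ∂μ ≤
      Real.exp (min (l ^ 2 * (∑ i ∈ Finset.Icc 1 n, d i ^ 2) / 2)
        (|l| * ∑ i ∈ Finset.Icc 1 n, d i)) * ∫ ω, Real.exp (l * ξ 0 ω) ∂μ := by
    rcases min_cases (l ^ 2 * (∑ i ∈ Finset.Icc 1 n, d i ^ 2) / 2)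
      (|l| * ∑ i ∈ Finset.Icc 1 n, d i) with ⟨he, _⟩ | ⟨he, _⟩ <;> rw [he]
    · exact hquad
    · exact hlin
  have hlog : Real.log (∫ ω, Real.exp (l * ξ n ω) ∂μ) ≤
      min (l ^ 2 * (∑ i ∈ Finset.Icc 1 n, d i ^ 2) / 2) (|l| * ∑ i ∈ Finset.Icc 1 n, d i) +
        Real.log (∫ ω, Real.exp (l * ξ 0 ω) ∂μ) := by
    have h2 := Real.log_le_log hpos_n hM
    rwa [Real.log_mul (Real.exp_ne_zero _) hpos_0.ne', Real.log_exp] at h2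
  -- scalar estimates
  have hcpos : 0 < Real.sqrt (∑ i ∈ Finset.Icc 1 n, d i ^ 2) := Real.sqrt_pos.2 hC2pos
  have hcD : Real.sqrt (∑ i ∈ Finset.Icc 1 n, d i ^ 2) ≤ ∑ i ∈ Finset.Icc 1 n, d i := by
    have h3 : (∑ i ∈ Finset.Icc 1 n, d i ^ 2) ≤ (∑ i ∈ Finset.Icc 1 n, d i) ^ 2 := by
      rw [sq (∑ i ∈ Finset.Icc 1 n, d i), Finset.sum_mul]
      apply Finset.sum_le_sum
      intro i hi
      calc d i ^ 2 = d i * d i := sq (d i)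
        _ ≤ (∑ j ∈ Finset.Icc 1 n, d j) * d i :=
            mul_le_mul_of_nonneg_right
              (Finset.single_le_sum (fun j hj => (hdpos j hj).le) hi) (hdpos i hi).le
        _ = d i * ∑ j ∈ Finset.Icc 1 n, d j := by ring
    calc Real.sqrt (∑ i ∈ Finset.Icc 1 n, d i ^ 2)
        ≤ Real.sqrt ((∑ i ∈ Finset.Icc 1 n, d i) ^ 2) := Real.sqrt_le_sqrt h3
      _ = ∑ i ∈ Finset.Icc 1 n, d i := Real.sqrt_sq hDpos.le
  have hmin := min_le_phi_gam hp hcpos hcD (abs_nonneg l)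
  have harg : |l| ^ 2 * Real.sqrt (∑ i ∈ Finset.Icc 1 n, d i ^ 2) ^ 2 / 2 =
      l ^ 2 * (∑ i ∈ Finset.Icc 1 n, d i ^ 2) / 2 := by
    rw [sq_abs, Real.sq_sqrt hC2pos.le]
  rw [harg] at hmin
  -- abbreviations
  have hgam0 : 0 ≤ gam (min p 2) (Real.sqrt (∑ i ∈ Finset.Icc 1 n, d i ^ 2))
      (∑ i ∈ Finset.Icc 1 n, d i) := gam_nonneg hr1.le (min_le_right _ _) hDpos
  have hadd := phi_add_le hp (mul_nonneg hgam0 (abs_nonneg l)) (mul_nonneg hd₀ (abs_nonneg l))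
  -- rewrite the combined bound
  have hB0 : 0 ≤ (gam (min p 2) (Real.sqrt (∑ i ∈ Finset.Icc 1 n, d i ^ 2))
      (∑ i ∈ Finset.Icc 1 n, d i) ^ min p 2 + d₀ ^ min p 2) ^ (1 / min p 2) :=
    Real.rpow_nonneg (add_nonneg (Real.rpow_nonneg hgam0 _) (Real.rpow_nonneg hd₀ _)) _
  have hBsimp : ((gam (min p 2) (Real.sqrt (∑ i ∈ Finset.Icc 1 n, d i ^ 2))
        (∑ i ∈ Finset.Icc 1 n, d i) * |l|) ^ min p 2 + (d₀ * |l|) ^ min p 2) ^ (1 / min p 2) =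
      |l| * (gam (min p 2) (Real.sqrt (∑ i ∈ Finset.Icc 1 n, d i ^ 2))
        (∑ i ∈ Finset.Icc 1 n, d i) ^ min p 2 + d₀ ^ min p 2) ^ (1 / min p 2) := by
    rw [Real.mul_rpow hgam0 (abs_nonneg l), Real.mul_rpow hd₀ (abs_nonneg l),
      show gam (min p 2) (Real.sqrt (∑ i ∈ Finset.Icc 1 n, d i ^ 2))
          (∑ i ∈ Finset.Icc 1 n, d i) ^ min p 2 * |l| ^ min p 2 +
          d₀ ^ min p 2 * |l| ^ min p 2 =
        |l| ^ min p 2 * (gam (min p 2) (Real.sqrt (∑ i ∈ Finset.Icc 1 n, d i ^ 2))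
          (∑ i ∈ Finset.Icc 1 n, d i) ^ min p 2 + d₀ ^ min p 2) by ring,
      Real.mul_rpow (Real.rpow_nonneg (abs_nonneg l) _)
        (add_nonneg (Real.rpow_nonneg hgam0 _) (Real.rpow_nonneg hd₀ _)),
      rpow_rpow_inv_self (abs_nonneg l) hr0]
  rw [hBsimp] at hadd
  -- φ is even
  have heven : ∀ x : ℝ, 0 ≤ x → ∀ y : ℝ, phi p (y * x) = phi p (|y| * x) := by
    intro x hx y
    rw [← phi_abs p (y * x), ← phi_abs p (|y| * x), abs_mul, abs_mul, abs_abs]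
  have hxi0 : Real.log (∫ ω, Real.exp (l * ξ 0 ω) ∂μ) ≤ phi p (d₀ * |l|) := by
    have h4 := hξ₀ l
    rwa [show phi p (d₀ * l) = phi p (d₀ * |l|) by
      rw [← phi_abs p (d₀ * l), ← phi_abs p (d₀ * |l|), abs_mul, abs_mul, abs_of_nonneg hd₀,
        abs_abs]] at h4
  rw [heven _ hB0 l]
  linarith [hlog, hmin, hxi0, hadd]
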